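/- (Per-iteration descent in expectation.) Let d, Q be positive integers with Q ≤ d, let η > 0, G ≥ 0, L > 0. Let f : ℝ^d → ℝ be differentiable with L-Lipschitz gradient (‖∇f(x) − ∇f(y)‖₂ ≤ L‖x − y‖₂ for all x, y). Let (Ω, ℱ, ℙ) be a probability space with a sub-σ-algebra ℱ_t, let x, e be ℱ_t-measurable square-integrable ℝ^d-valued random vectors, and g a square-integrable ℝ^d-valued random vector with E[g | ℱ_t] = ∇f(x) a.s. and E[‖g − ∇f(x)‖₂²] ≤ G². Set x̃ = x − e and x̃⁺ = x̃ − η g, and assume f(x̃), f(x̃⁺) are integrable. Then E[f(x̃⁺)] ≤ E[f(x̃)] − (η(1 − ηL)/2)·E[‖∇f(x)‖₂²] + (ηL²/2)·E[‖e‖₂²] + (η²L/2)·G². -/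

import Mathlib

open MeasureTheory InnerProductSpace

section Helpers

variable {H : Type*} [NormedAddCommGroup H] [InnerProductSpace ℝ H] [CompleteSpace H]

lemma descent14 {f : H → ℝ} (hf : Differentiable ℝ f) {L : ℝ}
    (hlip : ∀ a b : H, ‖gradient f a - gradient f b‖ ≤ L * ‖a - b‖) (u v : H) :
    f (u + v) ≤ f u + ⟪gradient f u, v⟫_ℝ + L / 2 * ‖v‖ ^ 2 := by
  set φ : ℝ → ℝ := fun t => f u + t * ⟪gradient f u, v⟫_ℝ + L * (t ^ 2 / 2) * ‖v‖ ^ 2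
      - f (u + t • v) with hφ
  have hderiv : ∀ t : ℝ, HasDerivAt (fun s : ℝ => f (u + s • v))
      ⟪gradient f (u + t • v), v⟫_ℝ t := by
    intro t
    have hline : HasDerivAt (fun s : ℝ => u + s • v) v t := by
      simpa using ((hasDerivAt_id t).smul_const v).const_add u
    have hg := (hf (u + t • v)).hasGradientAt.hasFDerivAt
    have := hg.comp_hasDerivAt t hline
    simpa [InnerProductSpace.toDual_apply_apply, Function.comp_def] using this
  have hφderiv : ∀ t : ℝ, HasDerivAt φ
      (⟪gradient f u, v⟫_ℝ + L * t * ‖v‖ ^ 2 - ⟪gradient f (u + t • v), v⟫_ℝ) t := by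
    intro t
    have h1 : HasDerivAt (fun t : ℝ => f u + t * ⟪gradient f u, v⟫_ℝ
        + L * (t ^ 2 / 2) * ‖v‖ ^ 2) (⟪gradient f u, v⟫_ℝ + L * t * ‖v‖ ^ 2) t := by
      have : HasDerivAt (fun t : ℝ => t ^ 2 / 2) t t := by
        simpa using ((hasDerivAt_pow 2 t).div_const 2)
      have h2 := ((this.const_mul L).mul_const (‖v‖ ^ 2))
      have h3 := ((hasDerivAt_id t).mul_const ⟪gradient f u, v⟫_ℝ).const_add (f u)
      simpa [mul_comm, mul_assoc, Pi.add_def] using h3.add h2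
    simpa [hφ, Pi.sub_def] using h1.sub (hderiv t)
  have hmono : MonotoneOn φ (Set.Icc (0:ℝ) 1) := by
    apply monotoneOn_of_deriv_nonneg (convex_Icc 0 1)
    · exact fun t _ => ((hφderiv t).continuousAt.continuousWithinAt)
    · intro t ht
      exact ((hφderiv t).differentiableAt).differentiableWithinAt
    · intro t ht
      rw [interior_Icc] at ht
      rw [(hφderiv t).deriv]
      have hb : ⟪gradient f (u + t • v) - gradient f u, v⟫_ℝ ≤ L * t * ‖v‖ ^ 2 := by
        calc ⟪gradient f (u + t • v) - gradient f u, v⟫_ℝ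
            ≤ ‖gradient f (u + t • v) - gradient f u‖ * ‖v‖ := real_inner_le_norm _ _
          _ ≤ (L * ‖(u + t • v) - u‖) * ‖v‖ := by
              gcongr; exact hlip _ _
          _ = L * t * ‖v‖ ^ 2 := by
              simp [norm_smul, abs_of_pos ht.1, sq]; ring
      rw [inner_sub_left] at hb
      linarith
  have h01 := hmono (Set.left_mem_Icc.2 zero_le_one) (Set.right_mem_Icc.2 zero_le_one) zero_le_one
  simp only [hφ] at h01
  simp only [zero_smul, add_zero, zero_mul, zero_pow, mul_zero, one_smul, one_mul, one_pow] at h01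
  nlinarith [h01]

lemma condexp_clm14 {α E F : Type*} [NormedAddCommGroup E] [NormedSpace ℝ E] [CompleteSpace E]
    [NormedAddCommGroup F] [NormedSpace ℝ F] [CompleteSpace F]
    {m m0 : MeasurableSpace α} {μ : Measure α} [IsFiniteMeasure μ] (hm : m ≤ m0)
    (T : E →L[ℝ] F) {g : α → E} (hg : Integrable g μ) :
    μ[fun ω => T (g ω)|m] =ᵐ[μ] fun ω => T ((μ[g|m]) ω) := by
  haveI : SigmaFinite (μ.trim hm) := by infer_instance
  refine (ae_eq_condExp_of_forall_setIntegral_eq hm (T.integrable_comp hg)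
    (fun s _ _ => (T.integrable_comp integrable_condExp).integrableOn)
    (fun s hs hμs => ?_) ?_).symm
  · have h1 : ∫ x in s, T ((μ[g|m]) x) ∂μ = T (∫ x in s, (μ[g|m]) x ∂μ) :=
      T.integral_comp_comm integrable_condExp.integrableOn
    have h2 : ∫ x in s, T (g x) ∂μ = T (∫ x in s, g x ∂μ) :=
      T.integral_comp_comm hg.integrableOn
    rw [h1, h2, setIntegral_condExp hm hg hs]
  · exact ⟨fun ω => T ((μ[g|m]) ω),
      (T.continuous.comp_stronglyMeasurable (stronglyMeasurable_condExp (f := g))),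
      Filter.EventuallyEq.rfl⟩

variable {α : Type*} {m0 : MeasurableSpace α} {μ : Measure α}

lemma integrable_inner14 {E : Type*} [NormedAddCommGroup E] [InnerProductSpace ℝ E]
    {f g : α → E} (hf : MemLp f 2 μ) (hg : MemLp g 2 μ) :
    Integrable (fun ω => ⟪f ω, g ω⟫_ℝ) μ := by
  have h := L2.integrable_inner (𝕜 := ℝ) (hf.toLp f) (hg.toLp g)
  refine h.congr ?_
  filter_upwards [hf.coeFn_toLp, hg.coeFn_toLp] with ω h1 h2
  rw [h1, h2]

lemma integrable_mul14 {f g : α → ℝ} (hf : MemLp f 2 μ) (hg : MemLp g 2 μ) :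
    Integrable (fun ω => f ω * g ω) μ := by
  simpa [RCLike.inner_apply, mul_comm] using integrable_inner14 (E := ℝ) hf hg

lemma key_integral14 {d : ℕ} [IsProbabilityMeasure μ] (ℱt : MeasurableSpace α) (hℱt : ℱt ≤ m0)
    {g G h : α → EuclideanSpace ℝ (Fin d)}
    (hgL2 : MemLp g 2 μ) (hGL2 : MemLp G 2 μ)
    (hcond : μ[g|ℱt] =ᵐ[μ] G)
    (hh : StronglyMeasurable[ℱt] h) (hhL2 : MemLp h 2 μ) :
    ∫ ω, ⟪h ω, g ω⟫_ℝ ∂μ = ∫ ω, ⟪h ω, G ω⟫_ℝ ∂μ := by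
  have hinner : ∀ (a b : EuclideanSpace ℝ (Fin d)),
      ⟪a, b⟫_ℝ = ∑ i : Fin d, a i * b i := by
    intro a b; simp [PiLp.inner_apply, RCLike.inner_apply, mul_comm]
  have hcoord : ∀ (u : α → EuclideanSpace ℝ (Fin d)), MemLp u 2 μ →
      ∀ i : Fin d, MemLp (fun ω => u ω i) 2 μ := fun u hu i =>
    (EuclideanSpace.proj i : EuclideanSpace ℝ (Fin d) →L[ℝ] ℝ).comp_memLp' hu
  have hint : ∀ (u v : α → EuclideanSpace ℝ (Fin d)), MemLp u 2 μ → MemLp v 2 μ →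
      ∀ i : Fin d, Integrable (fun ω => u ω i * v ω i) μ := fun u v hu hv i =>
    integrable_mul14 (hcoord u hu i) (hcoord v hv i)
  simp_rw [hinner]
  rw [integral_finset_sum _ (fun i _ => hint h g hhL2 hgL2 i),
      integral_finset_sum _ (fun i _ => hint h G hhL2 hGL2 i)]
  refine Finset.sum_congr rfl (fun i _ => ?_)
  have hgi : μ[(fun ω => g ω i)|ℱt] =ᵐ[μ] fun ω => G ω i := by
    have h1 := condexp_clm14 hℱt (EuclideanSpace.proj (𝕜 := ℝ) i) (hgL2.integrable one_le_two)
    refine h1.trans ?_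
    filter_upwards [hcond] with ω hω
    simp [hω]
  have hhi : StronglyMeasurable[ℱt] (fun ω => h ω i) :=
    (EuclideanSpace.proj (𝕜 := ℝ) i).continuous.comp_stronglyMeasurable hh
  have hmul : μ[(fun ω => h ω i) * (fun ω => g ω i)|ℱt]
      =ᵐ[μ] (fun ω => h ω i) * μ[(fun ω => g ω i)|ℱt] :=
    condExp_mul_of_stronglyMeasurable_left hhi (hint h g hhL2 hgL2 i)
      ((hcoord g hgL2 i).integrable one_le_two)
  calc ∫ ω, h ω i * g ω i ∂μ
      = ∫ ω, (μ[(fun ω => h ω i) * (fun ω => g ω i)|ℱt]) ω ∂μ :=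
        (integral_condExp hℱt).symm
    _ = ∫ ω, h ω i * G ω i ∂μ := by
        refine integral_congr_ae ?_
        filter_upwards [hmul, hgi] with ω h1 h2
        simp only [Pi.mul_apply] at h1 ⊢
        rw [h1, h2]

end Helpers

theorem stmt14 (d Q : ℕ) (hd : 0 < d) (hQ : 0 < Q) (hQd : Q ≤ d)
    (η G L : ℝ) (hη : 0 < η) (hG : 0 ≤ G) (hL : 0 < L)
    (f : EuclideanSpace ℝ (Fin d) → ℝ) (hf : Differentiable ℝ f)
    (hlip : ∀ a b : EuclideanSpace ℝ (Fin d),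
      ‖gradient f a - gradient f b‖ ≤ L * ‖a - b‖)
    {Ω : Type*} {m : MeasurableSpace Ω} (P : Measure Ω) [IsProbabilityMeasure P]
    (ℱt : MeasurableSpace Ω) (hℱt : ℱt ≤ m)
    (x e g : Ω → EuclideanSpace ℝ (Fin d))
    (hx : StronglyMeasurable[ℱt] x) (he : StronglyMeasurable[ℱt] e)
    (hxL2 : MemLp x 2 P) (heL2 : MemLp e 2 P) (hgL2 : MemLp g 2 P)
    (hcond : P[g|ℱt] =ᵐ[P] fun ω => gradient f (x ω))
    (hvar : ∫ ω, ‖g ω - gradient f (x ω)‖ ^ 2 ∂P ≤ G ^ 2)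
    (hint1 : Integrable (fun ω => f (x ω - e ω)) P)
    (hint2 : Integrable (fun ω => f (x ω - e ω - η • g ω)) P) :
    ∫ ω, f (x ω - e ω - η • g ω) ∂P ≤
      ∫ ω, f (x ω - e ω) ∂P
      - η * (1 - η * L) / 2 * ∫ ω, ‖gradient f (x ω)‖ ^ 2 ∂P
      + η * L ^ 2 / 2 * ∫ ω, ‖e ω‖ ^ 2 ∂P
      + η ^ 2 * L / 2 * G ^ 2 := by
  have hgradcont : Continuous (gradient f) := by
    refine (LipschitzWith.of_dist_le_mul (K := L.toNNReal) (fun a b => ?_)).continuous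
    rw [dist_eq_norm, dist_eq_norm]
    simpa [Real.coe_toNNReal L hL.le] using hlip a b
  -- MemLp of gradients
  have hgradL2 : ∀ (u : Ω → EuclideanSpace ℝ (Fin d)), MemLp u 2 P →
      MemLp (fun ω => gradient f (u ω)) 2 P := by
    intro u hu
    have hdom : MemLp (fun ω => ‖gradient f 0‖ + L * ‖u ω‖) 2 P :=
      (memLp_const (‖gradient f 0‖)).add ((hu.norm).const_mul L)
    refine hdom.of_le (hgradcont.comp_aestronglyMeasurable hu.aestronglyMeasurable) ?_
    refine Filter.Eventually.of_forall (fun ω => ?_)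
    have h1 : ‖gradient f (u ω) - gradient f 0‖ ≤ L * ‖u ω‖ := by
      simpa using hlip (u ω) 0
    have h2 : ‖gradient f (u ω)‖ ≤ ‖gradient f 0‖ + L * ‖u ω‖ := by
      have := norm_sub_norm_le (gradient f (u ω)) (gradient f 0)
      linarith
    have h3 : (0:ℝ) ≤ ‖gradient f 0‖ + L * ‖u ω‖ := by positivity
    rw [Real.norm_eq_abs, abs_of_nonneg h3]
    exact h2
  have hDxL2 : MemLp (fun ω => gradient f (x ω)) 2 P := hgradL2 x hxL2
  have hDyL2 : MemLp (fun ω => gradient f (x ω - e ω)) 2 P :=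
    hgradL2 _ (hxL2.sub heL2)
  have hDxM : StronglyMeasurable[ℱt] (fun ω => gradient f (x ω)) :=
    hgradcont.comp_stronglyMeasurable hx
  have hDyM : StronglyMeasurable[ℱt] (fun ω => gradient f (x ω - e ω)) :=
    hgradcont.comp_stronglyMeasurable (hx.sub he)
  -- integrabilities
  have hIinner1 : Integrable (fun ω => ⟪gradient f (x ω - e ω), g ω⟫_ℝ) P :=
    integrable_inner14 hDyL2 hgL2
  have hIg2 : Integrable (fun ω => ‖g ω‖ ^ 2) P := hgL2.norm.integrable_sq
  have hIDx2 : Integrable (fun ω => ‖gradient f (x ω)‖ ^ 2) P := hDxL2.norm.integrable_sq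
  have hIe2 : Integrable (fun ω => ‖e ω‖ ^ 2) P := heL2.norm.integrable_sq
  have hIdiff2 : Integrable (fun ω => ‖g ω - gradient f (x ω)‖ ^ 2) P :=
    (hgL2.sub hDxL2).norm.integrable_sq
  have hIinner2 : Integrable (fun ω => ⟪gradient f (x ω - e ω), gradient f (x ω)⟫_ℝ) P :=
    integrable_inner14 hDyL2 hDxL2
  have hIinner3 : Integrable (fun ω => ⟪gradient f (x ω), g ω⟫_ℝ) P :=
    integrable_inner14 hDxL2 hgL2
  set A := ∫ ω, ‖gradient f (x ω)‖ ^ 2 ∂P with hA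
  set Ee := ∫ ω, ‖e ω‖ ^ 2 ∂P with hEe
  -- step 1 : pointwise descent + integration
  have hptwise : ∀ ω, f (x ω - e ω - η • g ω) ≤ f (x ω - e ω)
      - η * ⟪gradient f (x ω - e ω), g ω⟫_ℝ + η ^ 2 * L / 2 * ‖g ω‖ ^ 2 := by
    intro ω
    have := descent14 hf hlip (x ω - e ω) (-(η • g ω))
    rw [← sub_eq_add_neg] at this
    calc f (x ω - e ω - η • g ω)
        ≤ f (x ω - e ω) + ⟪gradient f (x ω - e ω), -(η • g ω)⟫_ℝ
          + L / 2 * ‖-(η • g ω)‖ ^ 2 := this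
      _ = f (x ω - e ω) - η * ⟪gradient f (x ω - e ω), g ω⟫_ℝ
          + η ^ 2 * L / 2 * ‖g ω‖ ^ 2 := by
          rw [inner_neg_right, inner_smul_right, norm_neg, norm_smul]
          simp [abs_of_pos hη]
          ring
  have hRHSint : Integrable (fun ω => f (x ω - e ω)
      - η * ⟪gradient f (x ω - e ω), g ω⟫_ℝ + η ^ 2 * L / 2 * ‖g ω‖ ^ 2) P :=
    (hint1.sub (hIinner1.const_mul η)).add (hIg2.const_mul (η ^ 2 * L / 2))
  have hmain : ∫ ω, f (x ω - e ω - η • g ω) ∂P ≤ ∫ ω, f (x ω - e ω) ∂P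
      - η * ∫ ω, ⟪gradient f (x ω - e ω), g ω⟫_ℝ ∂P
      + η ^ 2 * L / 2 * ∫ ω, ‖g ω‖ ^ 2 ∂P := by
    have h0 := integral_mono hint2 hRHSint hptwise
    have e1 : ∫ ω, (f (x ω - e ω) - η * ⟪gradient f (x ω - e ω), g ω⟫_ℝ
        + η ^ 2 * L / 2 * ‖g ω‖ ^ 2) ∂P
        = (∫ ω, (f (x ω - e ω) - η * ⟪gradient f (x ω - e ω), g ω⟫_ℝ) ∂P)
          + ∫ ω, η ^ 2 * L / 2 * ‖g ω‖ ^ 2 ∂P :=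
      integral_add (hint1.sub (hIinner1.const_mul η)) (hIg2.const_mul (η ^ 2 * L / 2))
    have e2 : ∫ ω, (f (x ω - e ω) - η * ⟪gradient f (x ω - e ω), g ω⟫_ℝ) ∂P
        = (∫ ω, f (x ω - e ω) ∂P) - ∫ ω, η * ⟪gradient f (x ω - e ω), g ω⟫_ℝ ∂P :=
      integral_sub hint1 (hIinner1.const_mul η)
    have e3 : ∫ ω, η * ⟪gradient f (x ω - e ω), g ω⟫_ℝ ∂P
        = η * ∫ ω, ⟪gradient f (x ω - e ω), g ω⟫_ℝ ∂P := integral_const_mul η _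
    have e4 : ∫ ω, η ^ 2 * L / 2 * ‖g ω‖ ^ 2 ∂P
        = η ^ 2 * L / 2 * ∫ ω, ‖g ω‖ ^ 2 ∂P := integral_const_mul _ _
    calc ∫ ω, f (x ω - e ω - η • g ω) ∂P ≤ _ := h0
      _ = _ := by rw [e1, e2, e3, e4]
  -- step 2 : condexp identities
  have hS1 : ∫ ω, ⟪gradient f (x ω - e ω), g ω⟫_ℝ ∂P
      = ∫ ω, ⟪gradient f (x ω - e ω), gradient f (x ω)⟫_ℝ ∂P :=
    key_integral14 ℱt hℱt hgL2 hDxL2 hcond hDyM hDyL2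
  have hS2 : ∫ ω, ⟪gradient f (x ω), g ω⟫_ℝ ∂P = A := by
    rw [key_integral14 ℱt hℱt hgL2 hDxL2 hcond hDxM hDxL2, hA]
    exact integral_congr_ae (Filter.Eventually.of_forall
      (fun ω => real_inner_self_eq_norm_sq _))
  -- step 3 : lower bound on cross term
  have hB1 : A / 2 - L ^ 2 / 2 * Ee
      ≤ ∫ ω, ⟪gradient f (x ω - e ω), gradient f (x ω)⟫_ℝ ∂P := by
    have hpt : ∀ ω, 1 / 2 * ‖gradient f (x ω)‖ ^ 2 - L ^ 2 / 2 * ‖e ω‖ ^ 2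
        ≤ ⟪gradient f (x ω - e ω), gradient f (x ω)⟫_ℝ := by
      intro ω
      set a := gradient f (x ω - e ω)
      set b := gradient f (x ω)
      have h1 : ⟪a, b⟫_ℝ = ⟪b, b⟫_ℝ + ⟪a - b, b⟫_ℝ := by
        rw [inner_sub_left]; ring
      have h2 : |⟪a - b, b⟫_ℝ| ≤ ‖a - b‖ * ‖b‖ := abs_real_inner_le_norm _ _
      have h3 : ‖a - b‖ ≤ L * ‖e ω‖ := by
        have := hlip (x ω - e ω) (x ω)
        simpa [norm_sub_rev] using this
      have h4 : ⟪b, b⟫_ℝ = ‖b‖ ^ 2 := real_inner_self_eq_norm_sq b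
      have h5 : (0:ℝ) ≤ ‖b‖ := norm_nonneg b
      have h6 : (0:ℝ) ≤ ‖e ω‖ := norm_nonneg _
      have h7 : ‖a - b‖ * ‖b‖ ≤ L * ‖e ω‖ * ‖b‖ := by gcongr
      nlinarith [abs_le.1 h2, sq_nonneg (L * ‖e ω‖ - ‖b‖)]
    have h0 := integral_mono ((hIDx2.const_mul (1/2:ℝ)).sub (hIe2.const_mul (L^2/2)))
      hIinner2 hpt
    have e5 : ∫ ω, (1 / 2 * ‖gradient f (x ω)‖ ^ 2 - L ^ 2 / 2 * ‖e ω‖ ^ 2) ∂P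
        = (∫ ω, 1 / 2 * ‖gradient f (x ω)‖ ^ 2 ∂P) - ∫ ω, L ^ 2 / 2 * ‖e ω‖ ^ 2 ∂P :=
      integral_sub (hIDx2.const_mul (1/2:ℝ)) (hIe2.const_mul (L^2/2))
    have e6 : ∫ ω, 1 / 2 * ‖gradient f (x ω)‖ ^ 2 ∂P = 1/2 * A := integral_const_mul _ _
    have e7 : ∫ ω, L ^ 2 / 2 * ‖e ω‖ ^ 2 ∂P = L^2/2 * Ee := integral_const_mul _ _
    calc A / 2 - L ^ 2 / 2 * Ee = 1/2 * A - L^2/2 * Ee := by ring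
      _ = ∫ ω, (1 / 2 * ‖gradient f (x ω)‖ ^ 2 - L ^ 2 / 2 * ‖e ω‖ ^ 2) ∂P := by
          rw [e5, e6, e7]
      _ ≤ _ := h0
  -- step 4 : second moment decomposition
  have hB2 : ∫ ω, ‖g ω‖ ^ 2 ∂P ≤ G ^ 2 + A := by
    have hpt : ∀ ω, ‖g ω‖ ^ 2 = ‖g ω - gradient f (x ω)‖ ^ 2
        + 2 * ⟪gradient f (x ω), g ω⟫_ℝ - ‖gradient f (x ω)‖ ^ 2 := by
      intro ω
      have := norm_sub_sq_real (g ω) (gradient f (x ω))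
      rw [real_inner_comm] at this
      linarith
    have e8 : ∫ ω, (‖g ω - gradient f (x ω)‖ ^ 2
        + 2 * ⟪gradient f (x ω), g ω⟫_ℝ - ‖gradient f (x ω)‖ ^ 2) ∂P
        = (∫ ω, (‖g ω - gradient f (x ω)‖ ^ 2 + 2 * ⟪gradient f (x ω), g ω⟫_ℝ) ∂P)
          - ∫ ω, ‖gradient f (x ω)‖ ^ 2 ∂P :=
      integral_sub (hIdiff2.add (hIinner3.const_mul 2)) hIDx2
    have e9 : ∫ ω, (‖g ω - gradient f (x ω)‖ ^ 2 + 2 * ⟪gradient f (x ω), g ω⟫_ℝ) ∂P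
        = (∫ ω, ‖g ω - gradient f (x ω)‖ ^ 2 ∂P)
          + ∫ ω, 2 * ⟪gradient f (x ω), g ω⟫_ℝ ∂P :=
      integral_add hIdiff2 (hIinner3.const_mul 2)
    have e10 : ∫ ω, 2 * ⟪gradient f (x ω), g ω⟫_ℝ ∂P
        = 2 * ∫ ω, ⟪gradient f (x ω), g ω⟫_ℝ ∂P := integral_const_mul _ _
    have h0 : ∫ ω, ‖g ω‖ ^ 2 ∂P = ∫ ω, ‖g ω - gradient f (x ω)‖ ^ 2 ∂P
        + 2 * ∫ ω, ⟪gradient f (x ω), g ω⟫_ℝ ∂P - A := by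
      rw [← e10, ← e9, hA, ← e8]
      exact integral_congr_ae (Filter.Eventually.of_forall (fun ω => hpt ω))
    rw [h0, hS2]
    linarith
  -- conclusion
  rw [hS1] at hmain
  have t1 : η * (A / 2 - L ^ 2 / 2 * Ee)
      ≤ η * ∫ ω, ⟪gradient f (x ω - e ω), gradient f (x ω)⟫_ℝ ∂P :=
    mul_le_mul_of_nonneg_left hB1 hη.le
  have t2 : η ^ 2 * L / 2 * ∫ ω, ‖g ω‖ ^ 2 ∂P ≤ η ^ 2 * L / 2 * (G ^ 2 + A) :=
    mul_le_mul_of_nonneg_left hB2 (by positivity)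
  have := hmain
  nlinarith [this, t1, t2]
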